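/- arXiv:2101.04780 — 2 statements merged into one kernel-verified Lean document; each statement's English description precedes it below -/
import Mathlib

section
/- Let I' ⊊ I be finite sets, with τ_i ≥ 0 and κ_i > 0 for i ∈ I, and γ ≥ 0. Suppose that for every j ∈ I ∖ I', τ_j - κ_j(∑_{i∈I} τ_i - γ)/(∑_{i∈I} κ_i) ≤ 0. Then (∑_{i∈I'} τ_i - γ)/(∑_{i∈I'} κ_i) ≥ (∑_{i∈I} τ_i - γ)/(∑_{i∈I} κ_i), provided I' is nonempty. -/
open scoped BigOperators

/-- Removing nodes with nonpositive tentative allocation does not decrease the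
common ratio `(∑ τ - γ)/(∑ κ)`. -/
theorem stmt_9 {ι : Type*} [DecidableEq ι] (I' I : Finset ι) (hss : I' ⊂ I)
    (τ κ : ι → ℝ) (hτ : ∀ i ∈ I, 0 ≤ τ i) (hκ : ∀ i ∈ I, 0 < κ i)
    (γ : ℝ) (hγ : 0 ≤ γ)
    (hrem : ∀ j ∈ I \ I',
      τ j - κ j * ((∑ i ∈ I, τ i) - γ) / (∑ i ∈ I, κ i) ≤ 0)
    (hne : I'.Nonempty) :
    ((∑ i ∈ I', τ i) - γ) / (∑ i ∈ I', κ i) ≥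
      ((∑ i ∈ I, τ i) - γ) / (∑ i ∈ I, κ i) := by
  have hsub : I' ⊆ I := hss.subset
  have hKpos : 0 < ∑ i ∈ I, κ i :=
    Finset.sum_pos (fun i hi => hκ i hi) (hne.mono hsub)
  have hK'pos : 0 < ∑ i ∈ I', κ i :=
    Finset.sum_pos (fun i hi => hκ i (hsub hi)) hne
  set χ : ℝ := ((∑ i ∈ I, τ i) - γ) / (∑ i ∈ I, κ i) with hχ
  have hSτ : ∑ j ∈ I \ I', τ j ≤ χ * ∑ j ∈ I \ I', κ j := by
    rw [Finset.mul_sum]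
    refine Finset.sum_le_sum fun j hj => ?_
    have := hrem j hj
    have h2 : κ j * ((∑ i ∈ I, τ i) - γ) / (∑ i ∈ I, κ i) = χ * κ j := by
      rw [hχ]; ring
    linarith
  have hτsplit : (∑ i ∈ I \ I', τ i) + ∑ i ∈ I', τ i = ∑ i ∈ I, τ i :=
    Finset.sum_sdiff hsub
  have hκsplit : (∑ i ∈ I \ I', κ i) + ∑ i ∈ I', κ i = ∑ i ∈ I, κ i :=
    Finset.sum_sdiff hsub
  have hχK : χ * ∑ i ∈ I, κ i = (∑ i ∈ I, τ i) - γ := by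
    rw [hχ]; field_simp [hKpos.ne']
  have hχS : χ * ∑ i ∈ I \ I', κ i = χ * (∑ i ∈ I, κ i) - χ * ∑ i ∈ I', κ i := by
    rw [← hκsplit]; ring
  have key : χ * (∑ i ∈ I', κ i) ≤ (∑ i ∈ I', τ i) - γ := by linarith
  rw [ge_iff_le, div_le_div_iff₀ hKpos hK'pos]
  calc ((∑ i ∈ I, τ i) - γ) * ∑ i ∈ I', κ i
      = (χ * ∑ i ∈ I', κ i) * ∑ i ∈ I, κ i := by rw [← hχK]; ring
    _ ≤ ((∑ i ∈ I', τ i) - γ) * ∑ i ∈ I, κ i :=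
        mul_le_mul_of_nonneg_right key hKpos.le
end

section
/- Fix a finite dynamic set I_d, constants ζ_i > 0, ψ_i > 0, and points p̃_i, z_i ∈ ℝ² with Γ_i = z_i − p̃_i ≠ 0 for i ∈ I_d, and γ ≥ 0 with ∑_{i∈I_d} ζ_i‖Γ_i‖ > γ. Suppose ∑_{i∈I_d} ζ_i‖p_i − p̃_i‖ = γ, each p_i lies on the segment [p̃_i, z_i], and the ratios (ψ_i/ζ_i)‖p_i − z_i‖ are equal across i ∈ I_d. Then for each n ∈ I_d, ‖p_n − z_n‖ = (∑_{i∈I_d} ζ_i‖Γ_i‖ − γ) / ((ψ_n/ζ_n) ∑_{i∈I_d} ζ_i²/ψ_i). -/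
open scoped BigOperators

/-- Closed-form residual distance of each dynamic node in the
movement-constrained optimal deployment. -/
theorem stmt_14 {ι : Type*} (Id : Finset ι)
    (ζ ψ : ι → ℝ) (hζ : ∀ i ∈ Id, 0 < ζ i) (hψ : ∀ i ∈ Id, 0 < ψ i)
    (p₀ z p : ι → EuclideanSpace ℝ (Fin 2))
    (Γ : ι → EuclideanSpace ℝ (Fin 2)) (hΓ : ∀ i ∈ Id, Γ i = z i - p₀ i)
    (hΓ0 : ∀ i ∈ Id, Γ i ≠ 0)
    (γ : ℝ) (hγ : 0 ≤ γ) (hbig : γ < ∑ i ∈ Id, ζ i * ‖Γ i‖)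
    (htot : ∑ i ∈ Id, ζ i * ‖p i - p₀ i‖ = γ)
    (hseg : ∀ i ∈ Id, p i ∈ segment ℝ (p₀ i) (z i))
    (heq : ∀ i ∈ Id, ∀ j ∈ Id,
      (ψ i / ζ i) * ‖p i - z i‖ = (ψ j / ζ j) * ‖p j - z j‖) :
    ∀ n ∈ Id, ‖p n - z n‖ =
      ((∑ i ∈ Id, ζ i * ‖Γ i‖) - γ) /
        ((ψ n / ζ n) * ∑ i ∈ Id, ζ i ^ 2 / ψ i) := by
  intro n hn
  set c : ℝ := (ψ n / ζ n) * ‖p n - z n‖ with hc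
  set S : ℝ := ∑ i ∈ Id, ζ i * ‖Γ i‖
  set D : ℝ := ∑ i ∈ Id, ζ i ^ 2 / ψ i
  -- each residual in terms of c
  have hres : ∀ i ∈ Id, ‖p i - z i‖ = c * (ζ i / ψ i) := by
    intro i hi
    have hψi := (hψ i hi).ne'
    have hζi := (hζ i hi).ne'
    rw [hc, ← heq i hi n hn]
    field_simp
  -- segment identity: ‖p-p₀‖ + ‖p-z‖ = ‖Γ‖
  have hsum : ∀ i ∈ Id, ‖p i - p₀ i‖ + ‖p i - z i‖ = ‖Γ i‖ := by
    intro i hi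
    have h := dist_add_dist_of_mem_segment (hseg i hi)
    rw [hΓ i hi]
    simpa [dist_eq_norm, norm_sub_rev (p₀ i)] using h
  -- key equation: γ = S - c * D
  have hkey : γ = S - c * D := by
    rw [← htot]
    have : ∀ i ∈ Id, ζ i * ‖p i - p₀ i‖ = ζ i * ‖Γ i‖ - c * (ζ i ^ 2 / ψ i) := by
      intro i hi
      have h1 := hsum i hi
      have h2 := hres i hi
      have hψi := (hψ i hi).ne'
      have h3 : ‖p i - p₀ i‖ = ‖Γ i‖ - c * (ζ i / ψ i) := by linarith
      rw [h3]
      field_simp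
    rw [Finset.sum_congr rfl this, Finset.sum_sub_distrib, ← Finset.mul_sum]
  have hDpos : 0 < D := by
    refine Finset.sum_pos (fun i hi => div_pos (pow_pos (hζ i hi) 2) (hψ i hi)) ?_
    rcases Finset.eq_empty_or_nonempty Id with h | h
    · exfalso
      have : S = 0 := by simp [S, h]
      linarith
    · exact h
  have hcD : c * D = S - γ := by linarith
  have hrn : (ψ n / ζ n) > 0 := div_pos (hψ n hn) (hζ n hn)
  rw [eq_div_iff (by positivity)]
  have : (ψ n / ζ n) * ‖p n - z n‖ * D = S - γ := by rw [← hc]; exact hcD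
  linarith [this]
end
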